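/- Let Π be a Boolean MDDLog program over EDB schema S_E and D a set of disjointness constraints over S_E such that Π is semi-simple w.r.t. D. Then for every 0-type θ there are finitely many S_E-instances (templates) T_0, ..., T_n such that for every S_E-instance I whose 0-type θ' satisfies θ' ⊆ θ: I ⊭ Π if and only if there is a homomorphism from I to T_i for some i ≤ n. -/

import Mathlib

namespace MDDLogPaper

/-! ### Relation symbols, facts, instances, schemas -/

/-- A relation symbol: a name together with an arity.  Names are drawn from the
countably infinite supply `ℕ`. -/
structure RelSym where
  name : ℕ
  arity : ℕ
deriving DecidableEq

/-- A fact: a relation symbol applied to a tuple of constants. Constants are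
drawn from the fixed countably infinite set `ℕ`. -/
structure Fact where
  rel : RelSym
  args : List ℕ
deriving DecidableEq

/-- An instance is a finite set of facts. -/
abbrev Instance := Finset Fact

/-- A schema is a finite set of relation symbols. -/
abbrev Schema := Finset RelSym

/-- `I` is an `S`-instance: every fact of `I` uses a relation symbol of `S`,
applied to a tuple of constants of matching length. -/
def InstanceOver (S : Schema) (I : Instance) : Prop :=
  ∀ f ∈ I, f.rel ∈ S ∧ f.args.length = f.rel.arity

/-- The active domain of an instance: all constants occurring in its facts. -/
def adom (I : Instance) : Finset ℕ :=
  I.biUnion fun f => f.args.toFinset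

/-! ### Homomorphisms -/

/-- `h` is a homomorphism from `I` to `J`. -/
def IsHom (h : ℕ → ℕ) (I J : Instance) : Prop :=
  ∀ f ∈ I, (⟨f.rel, f.args.map h⟩ : Fact) ∈ J

/-- There is a homomorphism from `I` to `J`. -/
def HomTo (I J : Instance) : Prop := ∃ h, IsHom h I J

/-! ### Cycles and girth -/

/-- `I` has a cycle of length `n`: there are `n` distinct facts
`R₀(a₀), …, R_{n-1}(a_{n-1})` in `I` and positions `pᵢ ≠ pᵢ'` of `Rᵢ` such that
the constant of `aᵢ` at position `pᵢ'` equals the constant of `a_{i⊕1}` at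
position `p_{i⊕1}` (⊕ is addition modulo `n`). -/
def HasCycle (I : Instance) (n : ℕ) : Prop :=
  0 < n ∧ ∃ f : ℕ → Fact, ∃ p p' : ℕ → ℕ,
    (∀ i < n, f i ∈ I) ∧
    (∀ i < n, ∀ j < n, i ≠ j → f i ≠ f j) ∧
    (∀ i < n, p i ≠ p' i ∧ p i < (f i).args.length ∧ p' i < (f i).args.length) ∧
    (∀ i < n, (f i).args.getD (p' i) 0 = (f ((i + 1) % n)).args.getD (p ((i + 1) % n)) 0)

/-- The girth of `I` exceeds `k`: `I` has no cycle of length at most `k`. -/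
def GirthGT (I : Instance) (k : ℕ) : Prop := ∀ n ≤ k, ¬ HasCycle I n

/-! ### (Monadic) disjunctive Datalog: syntax -/

/-- An atom: a relation symbol applied to variables (variables are drawn from
the countably infinite supply `ℕ`). -/
structure Atom where
  rel : RelSym
  args : List ℕ
deriving DecidableEq

instance : Inhabited Atom := ⟨⟨⟨0, 0⟩, []⟩⟩

/-- The fact obtained by applying a variable assignment to an atom. -/
def Atom.subst (h : ℕ → ℕ) (a : Atom) : Fact := ⟨a.rel, a.args.map h⟩

/-- A disjunctive Datalog rule `S₁(x₁) ∨ … ∨ Sₘ(xₘ) ← R₁(y₁) ∧ … ∧ Rₙ(yₙ)`,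
given by the list of its head atoms and the list of its body atoms. -/
structure Rule where
  head : List Atom
  body : List Atom
deriving DecidableEq

def Rule.headVars (ρ : Rule) : List ℕ := (ρ.head.map Atom.args).flatten
def Rule.bodyVars (ρ : Rule) : List ℕ := (ρ.body.map Atom.args).flatten
def Rule.vars (ρ : Rule) : List ℕ := ρ.headVars ++ ρ.bodyVars

/-- Well-formed rule: the body is nonempty, atoms respect arities, and every
variable occurring in the head also occurs in the body. -/
def Rule.WF (ρ : Rule) : Prop :=
  ρ.body ≠ [] ∧ (∀ a ∈ ρ.head ++ ρ.body, a.args.length = a.rel.arity) ∧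
    ∀ x ∈ ρ.headVars, x ∈ ρ.bodyVars

/-- A disjunctive Datalog program: a finite set of rules together with a
selected goal relation. -/
structure Program where
  rules : List Rule
  goal : RelSym
deriving DecidableEq

/-- All relation symbols occurring in the program. -/
def Program.rels (P : Program) : List RelSym :=
  (P.rules.map fun ρ => (ρ.head ++ ρ.body).map Atom.rel).flatten

/-- The IDB relations: relation symbols occurring in some rule head. -/
def Program.idb (P : Program) : List RelSym :=
  (P.rules.map fun ρ => ρ.head.map Atom.rel).flatten

def Program.IsIDB (P : Program) (R : RelSym) : Prop := R ∈ P.idb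

/-- Well-formed program: all rules are well formed, the goal relation does not
occur in rule bodies, and occurs in heads only as the single disjunct of a
(non-disjunctive) goal rule. -/
def Program.WF (P : Program) : Prop :=
  (∀ ρ ∈ P.rules, ρ.WF) ∧
  (∀ ρ ∈ P.rules, ∀ a ∈ ρ.body, a.rel ≠ P.goal) ∧
  (∀ ρ ∈ P.rules, ∀ a ∈ ρ.head, a.rel = P.goal → ρ.head = [a])

/-- Monadic: every IDB relation except the goal relation has arity at most one. -/
def Program.Monadic (P : Program) : Prop :=
  ∀ R ∈ P.idb, R ≠ P.goal → R.arity ≤ 1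

/-- Boolean: the goal relation is nullary. -/
def Program.Boolean (P : Program) : Prop := P.goal.arity = 0

/-- `P` is a program over EDB schema `S`: the EDB relations of `P` (the
relation symbols of `P` that do not occur in rule heads) all belong to `S`,
and `S` contains no IDB relation of `P` and not the goal relation. -/
def Program.EDBOver (P : Program) (S : Schema) : Prop :=
  (∀ R ∈ P.rels, ¬ P.IsIDB R → R ∈ S) ∧ (∀ R ∈ S, ¬ P.IsIDB R ∧ R ≠ P.goal)

/-- `P` is a Boolean MDDLog program over EDB schema `S`. -/
def BooleanMDDLogOver (S : Schema) (P : Program) : Prop :=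
  P.WF ∧ P.Monadic ∧ P.Boolean ∧ P.EDBOver S

/-! ### Semantics -/

/-- An instance satisfies a rule if every assignment making all body atoms true
makes some head atom true. -/
def Rule.SatisfiedIn (ρ : Rule) (J : Instance) : Prop :=
  ∀ h : ℕ → ℕ, (∀ a ∈ ρ.body, a.subst h ∈ J) → ∃ a ∈ ρ.head, a.subst h ∈ J

/-- `J` is a model of the program `P`: it satisfies all rules of `P`. -/
def Program.ModelOf (P : Program) (J : Instance) : Prop :=
  ∀ ρ ∈ P.rules, ρ.SatisfiedIn J

/-- Boolean semantics: `I ⊨ P` iff `goal() ∈ J` for every model `J` of `P`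
with `I ⊆ J`. -/
def Program.Sat (P : Program) (I : Instance) : Prop :=
  ∀ J : Instance, I ⊆ J → P.ModelOf J → (⟨P.goal, []⟩ : Fact) ∈ J

/-- `as ∈ P(I)` for a program `P` of arbitrary arity:
`as` is a tuple over the active domain of `I` of length the arity of the goal
relation and `goal(as) ∈ J` for every model `J` of `P` with `I ⊆ J`. -/
def Program.Answers (P : Program) (I : Instance) (as : List ℕ) : Prop :=
  as.length = P.goal.arity ∧ (∀ x ∈ as, x ∈ adom I) ∧
  ∀ J : Instance, I ⊆ J → P.ModelOf J → (⟨P.goal, as⟩ : Fact) ∈ J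

/-- Containment of Boolean programs over the EDB schema `S`. -/
def Contained (S : Schema) (P₁ P₂ : Program) : Prop :=
  ∀ I : Instance, InstanceOver S I → P₁.Sat I → P₂.Sat I

/-- Containment of Boolean programs over `S`-instances of girth exceeding `k`. -/
def ContainedGirth (S : Schema) (k : ℕ) (P₁ P₂ : Program) : Prop :=
  ∀ I : Instance, InstanceOver S I → GirthGT I k → P₁.Sat I → P₂.Sat I

/-! ### Size measures -/

def Atom.size (a : Atom) : ℕ := 1 + a.args.length

def Rule.size (ρ : Rule) : ℕ := ((ρ.head ++ ρ.body).map Atom.size).sum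

/-- The size of a program: the number of symbols needed to write it, counting
relation and variable names as length one. -/
def Program.size (P : Program) : ℕ := (P.rules.map Rule.size).sum

/-- Number of distinct variables of a rule. -/
def Rule.varWidth (ρ : Rule) : ℕ := ρ.vars.dedup.length

/-- Variable width of a set of rules: maximum number of variables in a rule. -/
def rulesVarWidth (rs : List Rule) : ℕ := (rs.map Rule.varWidth).foldr max 0

def Program.varWidth (P : Program) : ℕ := rulesVarWidth P.rules

/-- Atom width of a set of rules: maximum number of atoms in a rule body. -/
def rulesAtomWidth (rs : List Rule) : ℕ := (rs.map fun ρ => ρ.body.length).foldr max 0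

/-- Rule size of a set of rules: maximum size of a rule. -/
def rulesMaxRuleSize (rs : List Rule) : ℕ := (rs.map Rule.size).foldr max 0

/-! ### Simple programs -/

/-- A rule is simple relative to a notion of EDB relation: it contains at most
one EDB atom, any such EDB atom contains all variables of the rule body, each
exactly once, and if there is no EDB atom then the body has at most one
variable. -/
def SimpleRule (isEDB : RelSym → Prop) (ρ : Rule) : Prop :=
  (∀ a ∈ ρ.body, ∀ b ∈ ρ.body, isEDB a.rel → isEDB b.rel → a = b) ∧
  (∀ a ∈ ρ.body, isEDB a.rel → ∀ x ∈ ρ.bodyVars, a.args.count x = 1) ∧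
  ((∀ a ∈ ρ.body, ¬ isEDB a.rel) → ρ.bodyVars.dedup.length ≤ 1)

/-- A simple MDDLog program. -/
def Program.Simple (P : Program) : Prop :=
  ∀ ρ ∈ P.rules, SimpleRule (fun R => ¬ P.IsIDB R) ρ

/-! ### Disjointness constraints -/

/-- A disjointness constraint `⊥ ← P₁(x) ∧ … ∧ Pₙ(x)`, given by the list of
its relations. -/
structure Constraint where
  rels : List RelSym
deriving DecidableEq

/-- Well-formed disjointness constraint: nonempty, and all relations have the
same arity, which is at most one. -/
def Constraint.WF (c : Constraint) : Prop :=
  c.rels ≠ [] ∧ ∃ k ≤ 1, ∀ P ∈ c.rels, P.arity = k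

/-- `I` satisfies the disjointness constraint `c`: there is no tuple to which
all relations of `c` apply in `I`. -/
def Constraint.SatisfiedIn (c : Constraint) (I : Instance) : Prop :=
  ¬ ∃ args : List ℕ, ∀ P ∈ c.rels, args.length = P.arity ∧ (⟨P, args⟩ : Fact) ∈ I

def SatisfiesAll (D : List Constraint) (I : Instance) : Prop :=
  ∀ c ∈ D, c.SatisfiedIn I

/-- The relation symbols occurring in a set of disjointness constraints. -/
def constraintRels (D : List Constraint) : List RelSym :=
  (D.map Constraint.rels).flatten

def ConstraintsOver (S : Schema) (D : List Constraint) : Prop :=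
  ∀ R ∈ constraintRels D, R ∈ S

/-- `P` is semi-simple w.r.t. `D`: `P` is simple when all relations occurring
in `D` are viewed as IDB relations. -/
def Program.SemiSimple (P : Program) (D : List Constraint) : Prop :=
  ∀ ρ ∈ P.rules, SimpleRule (fun R => ¬ P.IsIDB R ∧ R ∉ constraintRels D) ρ

/-- `P` is empty w.r.t. `D` (on `S`-instances). -/
def Program.EmptyWrt (P : Program) (S : Schema) (D : List Constraint) : Prop :=
  ∀ I : Instance, InstanceOver S I → SatisfiesAll D I → ¬ P.Sat I

def constraintsSize (D : List Constraint) : ℕ :=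
  (D.map fun c => 1 + c.rels.length).sum

/-- Variable width of a set of disjointness constraints (each constraint uses
a single variable when its relations are unary, none when nullary). -/
def constraintsVarWidth (D : List Constraint) : ℕ :=
  (D.map fun c => (c.rels.map RelSym.arity).foldr max 0).foldr max 0

/-! ### 0-types, 1-types -/

/-- A 0-type for `D`: a set of nullary relation symbols from the relations of
`D` that does not contain all relations co-occurring in some constraint of `D`. -/
def Is0Type (D : List Constraint) (θ : Finset RelSym) : Prop :=
  (∀ P ∈ θ, P.arity = 0 ∧ P ∈ constraintRels D) ∧
  ∀ c ∈ D, ¬ ∀ P ∈ c.rels, P ∈ θ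

/-- A 1-type for `D`. -/
def Is1Type (D : List Constraint) (t : Finset RelSym) : Prop :=
  (∀ P ∈ t, P.arity = 1 ∧ P ∈ constraintRels D) ∧
  ∀ c ∈ D, ¬ ∀ P ∈ c.rels, P ∈ t

/-- The 0-type of `I` is contained in `θ`. -/
def ZeroTypeLE (D : List Constraint) (I : Instance) (θ : Finset RelSym) : Prop :=
  ∀ P : RelSym, P.arity = 0 → P ∈ constraintRels D → (⟨P, []⟩ : Fact) ∈ I → P ∈ θ

/-- Specification of the facts of the instance `K_θ`, with constants given by
an (injective) encoding `e` of 1-types: `P(t)` for each 1-type `t` and each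
`P ∈ t`; `R(t₁,…,tₙ)` for each `R ∈ S \ S_D` and all 1-types `t₁,…,tₙ`; and
`P()` for each nullary `P ∈ θ`. -/
def KSpec (S : Schema) (D : List Constraint) (e : Finset RelSym → ℕ)
    (θ : Finset RelSym) (f : Fact) : Prop :=
  (∃ t : Finset RelSym, Is1Type D t ∧ ∃ P ∈ t, f = ⟨P, [e t]⟩) ∨
  (∃ R ∈ S, R ∉ constraintRels D ∧
    ∃ ts : List (Finset RelSym), ts.length = R.arity ∧ (∀ t ∈ ts, Is1Type D t) ∧
      f = ⟨R, ts.map e⟩) ∨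
  (∃ P ∈ θ, f = ⟨P, []⟩)

/-! ### Conjunctive queries -/

/-- A Boolean conjunctive query: a finite conjunction of atoms, all variables
existentially quantified. -/
abbrev CQ := List Atom

/-- `I ⊨ q` for a Boolean CQ `q`. -/
def CQSat (q : CQ) (I : Instance) : Prop :=
  ∃ h : ℕ → ℕ, ∀ a ∈ q, a.subst h ∈ I

def CQOver (S : Schema) (q : CQ) : Prop :=
  ∀ a ∈ q, a.rel ∈ S ∧ a.args.length = a.rel.arity

def CQsize (q : CQ) : ℕ := (q.map Atom.size).sum

/-- Containment of a Boolean MDDLog program in a Boolean CQ. -/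
def ContainedInCQ (S : Schema) (P : Program) (q : CQ) : Prop :=
  ∀ I : Instance, InstanceOver S I → P.Sat I → CQSat q I

/-! ### Tiling problems -/

/-- A 2-exp tiling problem `(𝕋, ℍ, 𝕍)`: tile types with horizontal and
vertical matching relations. -/
structure TilingProblem where
  tiles : Finset ℕ
  H : Finset (ℕ × ℕ)
  V : Finset (ℕ × ℕ)

def TilingProblem.WF (P : TilingProblem) : Prop :=
  (∀ p ∈ P.H, p.1 ∈ P.tiles ∧ p.2 ∈ P.tiles) ∧
  (∀ p ∈ P.V, p.1 ∈ P.tiles ∧ p.2 ∈ P.tiles)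

def TilingProblem.size (P : TilingProblem) : ℕ := P.tiles.card + P.H.card + P.V.card

/-- There is a tiling of the `2^{2^n} × 2^{2^n}` square for `P` and the input
word `w` (where `n + 1` is the length of `w`). -/
def HasSquareTiling (P : TilingProblem) (w : List ℕ) : Prop :=
  ∃ f : ℕ → ℕ → ℕ,
    (∀ i < 2 ^ 2 ^ (w.length - 1), ∀ j < 2 ^ 2 ^ (w.length - 1), f i j ∈ P.tiles) ∧
    (∀ j < w.length, f 0 j = w.getD j 0) ∧
    (∀ i, ∀ j < 2 ^ 2 ^ (w.length - 1), i + 1 < 2 ^ 2 ^ (w.length - 1) → (f i j, f (i + 1) j) ∈ P.H) ∧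
    (∀ i < 2 ^ 2 ^ (w.length - 1), ∀ j, j + 1 < 2 ^ 2 ^ (w.length - 1) → (f i j, f i (j + 1)) ∈ P.V)

/-- There is a tiling of the `2^{2^n} × 2^{2^n}` torus for `P` and `w`. -/
def HasTorusTiling (P : TilingProblem) (w : List ℕ) : Prop :=
  ∃ f : ℕ → ℕ → ℕ,
    (∀ i < 2 ^ 2 ^ (w.length - 1), ∀ j < 2 ^ 2 ^ (w.length - 1), f i j ∈ P.tiles) ∧
    (∀ j < w.length, f 0 j = w.getD j 0) ∧
    (∀ i < 2 ^ 2 ^ (w.length - 1), ∀ j < 2 ^ 2 ^ (w.length - 1),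
      (f i j, f ((i + 1) % 2 ^ 2 ^ (w.length - 1)) j) ∈ P.H) ∧
    (∀ i < 2 ^ 2 ^ (w.length - 1), ∀ j < 2 ^ 2 ^ (w.length - 1),
      (f i j, f i ((j + 1) % 2 ^ 2 ^ (w.length - 1))) ∈ P.V)

/-! ### First-order rewritability -/

/-- First-order formulas over relational schemas, with variables from `ℕ`. -/
inductive FO where
  | atom (R : RelSym) (args : List ℕ)
  | eq (x y : ℕ)
  | fls
  | imp (φ ψ : FO)
  | all (x : ℕ) (φ : FO)

/-- Active-domain semantics of first-order formulas on instances. -/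
def FO.Eval (I : Instance) : FO → (ℕ → ℕ) → Prop
  | .atom R args, h => (⟨R, args.map h⟩ : Fact) ∈ I
  | .eq x y, h => h x = h y
  | .fls, _ => False
  | .imp φ ψ, h => FO.Eval I φ h → FO.Eval I ψ h
  | .all x φ, h => ∀ a ∈ adom I, FO.Eval I φ (Function.update h x a)

def FO.Over (S : Schema) : FO → Prop
  | .atom R args => R ∈ S ∧ args.length = R.arity
  | .eq _ _ => True
  | .fls => True
  | .imp φ ψ => FO.Over S φ ∧ FO.Over S ψ
  | .all _ φ => FO.Over S φ

def FOSat (I : Instance) (φ : FO) : Prop := ∀ h : ℕ → ℕ, FO.Eval I φ h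

/-- `P` is rewritable into a first-order sentence over `S`. -/
def FORewritable (S : Schema) (P : Program) : Prop :=
  ∃ φ : FO, FO.Over S φ ∧ ∀ I : Instance, InstanceOver S I → (P.Sat I ↔ FOSat I φ)

/-- A non-disjunctive Datalog program: every rule head consists of exactly one
atom. -/
def Program.IsDatalog (P : Program) : Prop := ∀ ρ ∈ P.rules, ρ.head.length = 1

/-- `P` is rewritable into a Boolean non-disjunctive Datalog program over `S`. -/
def DatalogRewritable (S : Schema) (P : Program) : Prop :=
  ∃ Γ : Program, Γ.WF ∧ Γ.Boolean ∧ Γ.IsDatalog ∧ Γ.EDBOver S ∧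
    ∀ I : Instance, InstanceOver S I → (P.Sat I ↔ Γ.Sat I)

/-! ### Connectedness and biconnectedness of rule bodies -/

/-- Two variables are adjacent in a body if they co-occur in one of its atoms. -/
def VarsAdj (B : List Atom) (x y : ℕ) : Prop := ∃ a ∈ B, x ∈ a.args ∧ y ∈ a.args

def bodyVarsList (B : List Atom) : List ℕ := (B.map Atom.args).flatten

/-- A body is connected if any two of its variables are linked by a path of
adjacent variables. -/
def ConnectedBody (B : List Atom) : Prop :=
  ∀ x ∈ bodyVarsList B, ∀ y ∈ bodyVarsList B, Relation.ReflTransGen (VarsAdj B) x y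

/-- Remove a variable from a body: delete all atoms containing it. -/
def RemoveVar (B : List Atom) (x : ℕ) : List Atom :=
  B.filter fun a => ¬ (a.args.contains x)

/-- A body is biconnected if removing any single variable (with all atoms
containing it) leaves it connected. -/
def Biconnected (B : List Atom) : Prop := ∀ x : ℕ, ConnectedBody (RemoveVar B x)

/-- A reflexive atom `R(x,…,x)`. -/
def ReflexiveAtom (a : Atom) : Prop := a.args ≠ [] ∧ ∃ x, ∀ y ∈ a.args, y = x

end MDDLogPaper

namespace MDDLogPaper


section Aux

open Classical

/-- An injective encoding of relation symbols into the naturals. -/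
instance : Encodable RelSym :=
  Encodable.ofEquiv (ℕ × ℕ)
    ⟨fun R => (R.name, R.arity), fun p => ⟨p.1, p.2⟩, fun _ => rfl, fun _ => rfl⟩

/-- An injective code for finite sets of relation symbols. -/
noncomputable def tcode : Finset RelSym → ℕ := Encodable.encode

lemma tcode_inj : Function.Injective tcode := Encodable.encode_injective

lemma list_shape {α : Type*} {l : List α} (h : l.length ≤ 1) : l = [] ∨ ∃ x, l = [x] := by
  match l with
  | [] => exact Or.inl rfl
  | [x] => exact Or.inr ⟨x, rfl⟩
  | x :: y :: t => simp at h

lemma len_le_one_eq {α : Type*} {l : List α} (h : l.length ≤ 1) {a b : α}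
    (ha : a ∈ l) (hb : b ∈ l) : a = b := by
  match l with
  | [] => cases ha
  | [x] => rw [List.mem_singleton.1 ha, List.mem_singleton.1 hb]
  | x :: y :: t => simp at h

lemma map_eq_singleton {α β : Type*} {f : α → β} {l : List α} {v : β}
    (h : l.map f = [v]) : ∃ b, l = [b] ∧ f b = v := by
  match l with
  | [] => simp at h
  | [b] => exact ⟨b, rfl, by simpa using h⟩
  | x :: y :: t => simp at h

lemma mem_rels_of {P : Program} {ρ : Rule} {a : Atom} (hρ : ρ ∈ P.rules)
    (ha : a ∈ ρ.head ++ ρ.body) : a.rel ∈ P.rels := by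
  simp only [Program.rels, List.mem_flatten, List.mem_map]
  exact ⟨(ρ.head ++ ρ.body).map Atom.rel, ⟨ρ, hρ, rfl⟩, List.mem_map_of_mem (f := Atom.rel) ha⟩

lemma mem_idb_of {P : Program} {ρ : Rule} {a : Atom} (hρ : ρ ∈ P.rules)
    (ha : a ∈ ρ.head) : P.IsIDB a.rel := by
  simp only [Program.IsIDB, Program.idb, List.mem_flatten, List.mem_map]
  exact ⟨ρ.head.map Atom.rel, ⟨ρ, hρ, rfl⟩, List.mem_map_of_mem (f := Atom.rel) ha⟩

lemma mem_bodyVars_of {ρ : Rule} {α : Atom} {x : ℕ} (hα : α ∈ ρ.body) (hx : x ∈ α.args) :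
    x ∈ ρ.bodyVars := by
  simp only [Rule.bodyVars, List.mem_flatten, List.mem_map]
  exact ⟨α.args, ⟨α, hα, rfl⟩, hx⟩

lemma mem_headVars_of {ρ : Rule} {α : Atom} {x : ℕ} (hα : α ∈ ρ.head) (hx : x ∈ α.args) :
    x ∈ ρ.headVars := by
  simp only [Rule.headVars, List.mem_flatten, List.mem_map]
  exact ⟨α.args, ⟨α, hα, rfl⟩, hx⟩

lemma bodyVars_mem {ρ : Rule} {x : ℕ} (hx : x ∈ ρ.bodyVars) : ∃ α ∈ ρ.body, x ∈ α.args := by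
  simp only [Rule.bodyVars, List.mem_flatten, List.mem_map] at hx
  obtain ⟨l, ⟨α, hα, rfl⟩, hxl⟩ := hx
  exact ⟨α, hα, hxl⟩

lemma nodup_indexOf_getElem {α : Type*} [DecidableEq α] {l : List α} (h : l.Nodup)
    (i : ℕ) (hi : i < l.length) : l.idxOf l[i] = i := by
  have h2 : l.idxOf l[i] < l.length := List.idxOf_lt_length_iff.2 (l.getElem_mem hi)
  exact (List.Nodup.getElem_inj_iff h).1 (List.getElem_idxOf h2)

/-- A head atom matched in a goal-free model has arity at most one. -/
lemma head_shape {S : Schema} {P : Program} (hP : BooleanMDDLogOver S P)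
    {ρ : Rule} {α : Atom} (hρ : ρ ∈ P.rules) (hα : α ∈ ρ.head)
    {J : Instance} {g : ℕ → ℕ} (hmem : α.subst g ∈ J)
    (hg : (⟨P.goal, []⟩ : Fact) ∉ J) :
    α.args = [] ∨ ∃ x, α.args = [x] := by
  have hwf := (hP.1.1 ρ hρ).2.1 α (List.mem_append.2 (Or.inl hα))
  by_cases hgoal : α.rel = P.goal
  · exfalso
    have hlen : α.args.length = 0 := by rw [hwf, hgoal, hP.2.2.1]
    have hargs : α.args = [] := List.length_eq_zero_iff.1 hlen
    apply hg
    have : α.subst g = (⟨P.goal, []⟩ : Fact) := by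
      simp [Atom.subst, hargs, hgoal]
    rwa [this] at hmem
  · have harity : α.rel.arity ≤ 1 := hP.2.1 α.rel (mem_idb_of hρ hα) hgoal
    exact list_shape (hwf ▸ harity)

/-- Closure of non-satisfaction under homomorphic preimages, for Boolean
monadic programs. -/
lemma not_sat_of_hom {S : Schema} {P : Program} (hP : BooleanMDDLogOver S P)
    {I T : Instance} (hI : InstanceOver S I) {h : ℕ → ℕ} (hh : IsHom h I T)
    (hT : ¬ P.Sat T) : ¬ P.Sat I := by
  classical
  rw [Program.Sat] at hT
  push_neg at hT
  obtain ⟨J', hTJ', hmod', hg'⟩ := hT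
  set M1 : Instance :=
    (((adom I) ×ˢ J').filter (fun p => p.2.args = [h p.1])).image
      (fun p => (⟨p.2.rel, [p.1]⟩ : Fact)) with hM1
  set M0 : Instance := J'.filter (fun f => f.args = []) with hM0
  set J : Instance := I ∪ M1 ∪ M0 with hJdef
  -- pushforward of facts of J
  have hpush : ∀ F ∈ J, (⟨F.rel, F.args.map h⟩ : Fact) ∈ J' := by
    intro F hF
    rcases Finset.mem_union.1 hF with hF | hF
    · rcases Finset.mem_union.1 hF with hF | hF
      · exact hTJ' (hh F hF)
      · simp only [hM1, Finset.mem_image, Finset.mem_filter, Finset.mem_product] at hF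
        obtain ⟨⟨b, f'⟩, ⟨⟨hb, hf'⟩, hargs⟩, rfl⟩ := hF
        simp only [List.map_cons, List.map_nil] at hargs ⊢
        have : f' = (⟨f'.rel, [h b]⟩ : Fact) := by cases f'; simp_all
        rw [← this]; exact hf'
    · simp only [hM0, Finset.mem_filter] at hF
      have : F = (⟨F.rel, F.args.map h⟩ : Fact) := by
        cases F; simp_all
      rw [← this]; exact hF.1
  -- variables of satisfied bodies land in the active domain of I
  have hadom : ∀ (ρ : Rule) (g : ℕ → ℕ), (∀ β ∈ ρ.body, β.subst g ∈ J) →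
      ∀ x ∈ ρ.bodyVars, g x ∈ adom I := by
    intro ρ g hb x hx
    obtain ⟨β, hβ, hxβ⟩ := bodyVars_mem hx
    have hgx : g x ∈ (β.subst g).args := by
      simp only [Atom.subst]
      exact List.mem_map_of_mem (f := g) hxβ
    have hF := hb β hβ
    rcases Finset.mem_union.1 hF with hF | hF
    · rcases Finset.mem_union.1 hF with hF | hF
      · exact Finset.mem_biUnion.2 ⟨β.subst g, hF, List.mem_toFinset.2 hgx⟩
      · simp only [hM1, Finset.mem_image, Finset.mem_filter, Finset.mem_product] at hF
        obtain ⟨⟨b, f'⟩, ⟨⟨hb', hf'⟩, hargs⟩, heq⟩ := hF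
        rw [← heq] at hgx
        simp only [List.mem_singleton] at hgx
        rwa [hgx]
    · simp only [hM0, Finset.mem_filter] at hF
      rw [hF.2] at hgx
      cases hgx
  have hmodel : P.ModelOf J := by
    intro ρ hρ g hb
    have hb' : ∀ a ∈ ρ.body, a.subst (fun y => h (g y)) ∈ J' := by
      intro a ha
      have := hpush _ (hb a ha)
      simpa [Atom.subst, List.map_map, Function.comp_def] using this
    obtain ⟨α, hα, hαmem⟩ := hmod' ρ hρ (fun y => h (g y)) hb'
    refine ⟨α, hα, ?_⟩
    rcases head_shape hP hρ hα hαmem hg' with hargs | ⟨x, hargs⟩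
    · have : α.subst g = (⟨α.rel, []⟩ : Fact) := by simp [Atom.subst, hargs]
      rw [this]
      apply Finset.mem_union.2 (Or.inr _)
      simp only [hM0, Finset.mem_filter]
      have : α.subst (fun y => h (g y)) = (⟨α.rel, []⟩ : Fact) := by
        simp [Atom.subst, hargs]
      exact ⟨by rwa [this] at hαmem, by simp⟩
    · have hxh : x ∈ ρ.headVars := mem_headVars_of hα (hargs ▸ List.mem_singleton.2 rfl)
      have hxb : x ∈ ρ.bodyVars := (hP.1.1 ρ hρ).2.2 x hxh
      have hgx : g x ∈ adom I := hadom ρ g hb x hxb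
      have : α.subst g = (⟨α.rel, [g x]⟩ : Fact) := by simp [Atom.subst, hargs]
      rw [this]
      apply Finset.mem_union.2 (Or.inl (Finset.mem_union.2 (Or.inr _)))
      simp only [hM1, Finset.mem_image, Finset.mem_filter, Finset.mem_product]
      refine ⟨(g x, ⟨α.rel, [h (g x)]⟩), ⟨⟨hgx, ?_⟩, rfl⟩, rfl⟩
      have : α.subst (fun y => h (g y)) = (⟨α.rel, [h (g x)]⟩ : Fact) := by
        simp [Atom.subst, hargs]
      rwa [this] at hαmem
  intro hsat
  have hIJ : I ⊆ J := fun f hf =>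
    Finset.mem_union.2 (Or.inl (Finset.mem_union.2 (Or.inl hf)))
  have hgoalJ := hsat J hIJ hmodel
  rcases Finset.mem_union.1 hgoalJ with hF | hF
  · rcases Finset.mem_union.1 hF with hF | hF
    · exact ((hP.2.2.2).2 P.goal (hI _ hF).1).2 rfl
    · simp only [hM1, Finset.mem_image, Finset.mem_filter, Finset.mem_product] at hF
      obtain ⟨p, _, heq⟩ := hF
      exact absurd (congrArg Fact.args heq) (by simp)
  · exact hg' (Finset.mem_filter.1 hF).1

end Aux

/-- for every 0-type `θ` there are finitely many templates
`T₀, …, Tₙ` such that for every `S_E`-instance `I` whose 0-type is contained in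
`θ`: `I ⊭ Π` iff `I` maps homomorphically into some `Tᵢ`. -/
theorem csp_templates (S : Schema) (P : Program) (D : List Constraint)
    (hP : BooleanMDDLogOver S P) (hD : ConstraintsOver S D) (hDwf : ∀ c ∈ D, c.WF)
    (hss : P.SemiSimple D)
    (θ : Finset RelSym) (hθ : Is0Type D θ) :
    ∃ Ts : List Instance, (∀ T ∈ Ts, InstanceOver S T) ∧
      ∀ I : Instance, InstanceOver S I → ZeroTypeLE D I θ →
        (¬ P.Sat I ↔ ∃ T ∈ Ts, HomTo I T) := by
  classical
  obtain ⟨hwf, hmon, hbool, hedb⟩ := hP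
  have hPfull : BooleanMDDLogOver S P := ⟨hwf, hmon, hbool, hedb⟩
  set A : Finset RelSym := S ∪ P.rels.toFinset with hA
  set UA : Finset RelSym := A.filter (fun R => R.arity = 1) with hUA
  set CodeSet : Finset ℕ := UA.powerset.image tcode with hCS
  set m : ℕ := S.sup RelSym.arity with hm
  set FactSet : Set Fact :=
    {f | f.rel ∈ S ∧ f.args.length = f.rel.arity ∧ ∀ x ∈ f.args, x ∈ CodeSet} with hFSdef
  -- finiteness of the set of candidate template facts
  have hLfin : {l : List ℕ | l.length ≤ m ∧ ∀ x ∈ l, x ∈ CodeSet}.Finite := by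
    have h1 : {l : List {x // x ∈ CodeSet} | l.length ≤ m}.Finite :=
      List.finite_length_le _ m
    apply Set.Finite.subset (h1.image (List.map Subtype.val))
    rintro l ⟨hlen, hmem⟩
    refine ⟨l.attach.map (fun x => (⟨x.1, hmem x.1 x.2⟩ : {x // x ∈ CodeSet})), by
      simpa using hlen, ?_⟩
    simp [List.map_map, Function.comp]
  have hFfin : FactSet.Finite := by
    have hprod := (S.finite_toSet.prod hLfin)
    apply Set.Finite.subset (hprod.image (fun p => (⟨p.1, p.2⟩ : Fact)))
    rintro f ⟨h1, h2, h3⟩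
    exact ⟨(f.rel, f.args), ⟨h1, by rw [h2]; exact Finset.le_sup h1, h3⟩, by cases f; rfl⟩
  have hTfin : {T : Instance | ↑T ⊆ FactSet ∧ ¬ P.Sat T}.Finite := by
    have h2 : {T : Instance | ↑T ⊆ FactSet}.Finite := by
      have heq : {T : Instance | ↑T ⊆ FactSet} =
          (fun T : Instance => (↑T : Set Fact)) ⁻¹' {s | s ⊆ FactSet} := rfl
      rw [heq]
      exact Set.Finite.preimage (Set.injOn_of_injective Finset.coe_injective)
        hFfin.finite_subsets
    exact h2.subset (fun T hT => hT.1)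
  refine ⟨hTfin.toFinset.toList, ?_, ?_⟩
  · intro T hT
    rw [Finset.mem_toList, Set.Finite.mem_toFinset] at hT
    intro f hf
    exact ⟨(hT.1 hf).1, (hT.1 hf).2.1⟩
  intro I hI _hzt
  constructor
  · -- forward: quotient construction
    intro hns
    rw [Program.Sat] at hns
    push_neg at hns
    obtain ⟨J, hIJ, hmodJ, hgJ⟩ := hns
    set J2 : Instance := J.filter (fun f => f.rel ∈ A) with hJ2
    have hIJ2 : I ⊆ J2 := by
      intro f hf
      refine Finset.mem_filter.2 ⟨hIJ hf, ?_⟩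
      exact Finset.mem_union.2 (Or.inl (hI f hf).1)
    have hmod2 : P.ModelOf J2 := by
      intro ρ hρ g hb
      obtain ⟨α, hα, hmem⟩ := hmodJ ρ hρ g (fun a ha => (Finset.mem_filter.1 (hb a ha)).1)
      refine ⟨α, hα, Finset.mem_filter.2 ⟨hmem, ?_⟩⟩
      exact Finset.mem_union.2 (Or.inr (List.mem_toFinset.2
        (mem_rels_of hρ (List.mem_append.2 (Or.inl hα)))))
    have hgJ2 : (⟨P.goal, []⟩ : Fact) ∉ J2 := fun hmem => hgJ (Finset.mem_filter.1 hmem).1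
    set q : ℕ → ℕ := fun a => tcode (UA.filter (fun Q => (⟨Q, [a]⟩ : Fact) ∈ J2)) with hq
    have htrans : ∀ (Q : RelSym) (a b : ℕ), Q ∈ UA → q a = q b →
        (⟨Q, [a]⟩ : Fact) ∈ J2 → (⟨Q, [b]⟩ : Fact) ∈ J2 := by
      intro Q a b hQ hab hmem
      have heq := tcode_inj hab
      have h1 : Q ∈ UA.filter (fun Q => (⟨Q, [a]⟩ : Fact) ∈ J2) :=
        Finset.mem_filter.2 ⟨hQ, hmem⟩
      rw [heq] at h1
      exact (Finset.mem_filter.1 h1).2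
    set qf : Fact → Fact := fun f => ⟨f.rel, f.args.map q⟩ with hqf
    set I0 : Instance := I.image qf with hI0
    set J0 : Instance := J2.image qf with hJ0
    have hnull : ∀ R : RelSym, (⟨R, ([] : List ℕ)⟩ : Fact) ∈ J0 → (⟨R, []⟩ : Fact) ∈ J2 := by
      intro R hmem
      obtain ⟨f, hf, heq⟩ := Finset.mem_image.1 hmem
      have hrel : f.rel = R := congrArg Fact.rel heq
      have hargs : f.args = [] := List.map_eq_nil_iff.1 (congrArg Fact.args heq)
      have : f = (⟨R, []⟩ : Fact) := by cases f; simp_all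
      rwa [this] at hf
    have huget : ∀ (R : RelSym) (v : ℕ), (⟨R, [v]⟩ : Fact) ∈ J0 →
        ∃ b, (⟨R, [b]⟩ : Fact) ∈ J2 ∧ q b = v := by
      intro R v hmem
      obtain ⟨f, hf, heq⟩ := Finset.mem_image.1 hmem
      have hrel : f.rel = R := congrArg Fact.rel heq
      have hargs : f.args.map q = [v] := congrArg Fact.args heq
      obtain ⟨b, hb, hqb⟩ := map_eq_singleton hargs
      refine ⟨b, ?_, hqb⟩
      have : f = (⟨R, [b]⟩ : Fact) := by cases f; simp_all
      rwa [this] at hf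
    have hg0 : (⟨P.goal, []⟩ : Fact) ∉ J0 := fun hmem => hgJ2 (hnull _ hmem)
    have hI0J0 : I0 ⊆ J0 := Finset.image_subset_image hIJ2
    have hmod0 : P.ModelOf J0 := by
      intro ρ hρ g hbody
      have hwfρ := hwf.1 ρ hρ
      have hbodyshape : ∀ α ∈ ρ.body,
          ¬(¬ P.IsIDB α.rel ∧ α.rel ∉ constraintRels D) →
          α.args = [] ∨ ∃ x, α.args = [x] := by
        intro α hα hnp
        have harity : α.rel.arity ≤ 1 := by
          rcases not_and_or.1 hnp with hidb | hc
          · exact hmon α.rel (Classical.not_not.1 hidb) (hwf.2.1 ρ hρ α hα)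
          · have hcc := Classical.not_not.1 hc
            simp only [constraintRels, List.mem_flatten, List.mem_map] at hcc
            obtain ⟨l, ⟨c, hcD, rfl⟩, hmemc⟩ := hcc
            obtain ⟨k, hk, hall⟩ := (hDwf c hcD).2
            rw [hall α.rel hmemc]; exact hk
        exact list_shape ((hwfρ.2.1 α (List.mem_append.2 (Or.inr hα))) ▸ harity)
      have hbUA : ∀ α ∈ ρ.body, (∃ x, α.args = [x]) → α.rel ∈ UA := by
        intro α hα ⟨x, hargs⟩
        refine Finset.mem_filter.2 ⟨Finset.mem_union.2 (Or.inr (List.mem_toFinset.2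
          (mem_rels_of hρ (List.mem_append.2 (Or.inr hα))))), ?_⟩
        rw [← hwfρ.2.1 α (List.mem_append.2 (Or.inr hα)), hargs]
        rfl
      -- lifting non-EDB body atoms along a compatible assignment
      have hlift : ∀ g' : ℕ → ℕ, (∀ x ∈ ρ.bodyVars, q (g' x) = g x) →
          ∀ α ∈ ρ.body, ¬(¬ P.IsIDB α.rel ∧ α.rel ∉ constraintRels D) →
          α.subst g' ∈ J2 := by
        intro g' hqg α hα hnp
        rcases hbodyshape α hα hnp with hargs | ⟨x, hargs⟩
        · have h1 : α.subst g = (⟨α.rel, []⟩ : Fact) := by simp [Atom.subst, hargs]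
          have h2 : α.subst g' = (⟨α.rel, []⟩ : Fact) := by simp [Atom.subst, hargs]
          rw [h2]
          exact hnull _ (h1 ▸ hbody α hα)
        · have hxb : x ∈ ρ.bodyVars := mem_bodyVars_of hα (hargs ▸ List.mem_singleton.2 rfl)
          have h1 : α.subst g = (⟨α.rel, [g x]⟩ : Fact) := by simp [Atom.subst, hargs]
          obtain ⟨b, hb, hqb⟩ := huget α.rel (g x) (h1 ▸ hbody α hα)
          have h2 : α.subst g' = (⟨α.rel, [g' x]⟩ : Fact) := by simp [Atom.subst, hargs]
          rw [h2]
          exact htrans α.rel b (g' x) (hbUA α hα ⟨x, hargs⟩) (by rw [hqb, hqg x hxb]) hb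
      -- finishing: from a satisfied body in J2 to a satisfied head in J0
      have hfinish : ∀ g' : ℕ → ℕ, (∀ x ∈ ρ.bodyVars, q (g' x) = g x) →
          (∀ α ∈ ρ.body, α.subst g' ∈ J2) → ∃ a ∈ ρ.head, a.subst g ∈ J0 := by
        intro g' hqg hb2
        obtain ⟨α, hα, hmem⟩ := hmod2 ρ hρ g' hb2
        refine ⟨α, hα, ?_⟩
        rcases head_shape hPfull hρ hα hmem hgJ2 with hargs | ⟨x, hargs⟩
        · have h1 : α.subst g = (⟨α.rel, ([] : List ℕ).map q⟩ : Fact) := by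
            simp [Atom.subst, hargs]
          have h2 : α.subst g' = (⟨α.rel, []⟩ : Fact) := by simp [Atom.subst, hargs]
          rw [h1]
          exact Finset.mem_image.2 ⟨⟨α.rel, []⟩, h2 ▸ hmem, rfl⟩
        · have hxh : x ∈ ρ.headVars := mem_headVars_of hα (hargs ▸ List.mem_singleton.2 rfl)
          have hxb : x ∈ ρ.bodyVars := hwfρ.2.2 x hxh
          have h1 : α.subst g = (⟨α.rel, [g x]⟩ : Fact) := by simp [Atom.subst, hargs]
          have h2 : α.subst g' = (⟨α.rel, [g' x]⟩ : Fact) := by simp [Atom.subst, hargs]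
          rw [h1, ← hqg x hxb]
          refine Finset.mem_image.2 ⟨⟨α.rel, [g' x]⟩, h2 ▸ hmem, rfl⟩
      by_cases hE : ∃ β ∈ ρ.body, ¬ P.IsIDB β.rel ∧ β.rel ∉ constraintRels D
      · -- there is an EDB atom containing all body variables
        obtain ⟨β, hβ, hpβ⟩ := hE
        have huniq := (hss ρ hρ).1
        have hcount := (hss ρ hρ).2.1 β hβ hpβ
        have hmemβ : (⟨β.rel, β.args.map g⟩ : Fact) ∈ J0 := hbody β hβ
        obtain ⟨f, hf, heq⟩ := Finset.mem_image.1 hmemβ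
        have hrel : f.rel = β.rel := congrArg Fact.rel heq
        have hargs : f.args.map q = β.args.map g := congrArg Fact.args heq
        have hlen : f.args.length = β.args.length := by
          have := congrArg List.length hargs
          simpa using this
        have hnodup : β.args.Nodup := List.nodup_iff_count_eq_one.2
          (fun x hx => hcount x (mem_bodyVars_of hβ hx))
        have hxmem : ∀ x ∈ ρ.bodyVars, x ∈ β.args := by
          intro x hx
          have h1 := hcount x hx
          have : 0 < List.count x β.args := by omega
          exact List.count_pos_iff.1 this
        set g' : ℕ → ℕ := fun x => f.args.getD (β.args.idxOf x) 0 with hg'def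
        have hqg : ∀ x ∈ ρ.bodyVars, q (g' x) = g x := by
          intro x hx
          have hxβ := hxmem x hx
          have hi : β.args.idxOf x < β.args.length := List.idxOf_lt_length_iff.2 hxβ
          have hi' : β.args.idxOf x < f.args.length := by omega
          have e1 : g' x = f.args[β.args.idxOf x] := List.getD_eq_getElem _ _ hi'
          rw [e1]
          have e2 : q f.args[β.args.idxOf x] = (f.args.map q)[β.args.idxOf x]'(by
            simpa using hi') := (List.getElem_map q).symm
          rw [e2]
          have e3 : (f.args.map q)[β.args.idxOf x]'(by simpa using hi') =
              (β.args.map g)[β.args.idxOf x]'(by simpa using hi) := by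
            congr 1
          rw [e3, List.getElem_map g, List.getElem_idxOf hi]
        have hβsubst : β.subst g' = f := by
          have hargs' : β.args.map g' = f.args := by
            apply List.ext_getElem (by simpa using hlen.symm)
            intro n h1 h2
            rw [List.getElem_map g']
            have : g' β.args[n] = f.args.getD (β.args.idxOf β.args[n]) 0 := rfl
            rw [this, nodup_indexOf_getElem hnodup n (by simpa using h1)]
            exact List.getD_eq_getElem _ _ h2
          show (⟨β.rel, β.args.map g'⟩ : Fact) = f
          rw [hargs', ← hrel]
        have hbody2 : ∀ α ∈ ρ.body, α.subst g' ∈ J2 := by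
          intro α hα
          by_cases hp : ¬ P.IsIDB α.rel ∧ α.rel ∉ constraintRels D
          · have : α = β := huniq α hα β hβ hp hpβ
            rw [this, hβsubst]; exact hf
          · exact hlift g' hqg α hα hp
        exact hfinish g' hqg hbody2
      · -- no EDB atom: at most one body variable
        push_neg at hE
        have hE' : ∀ β ∈ ρ.body, ¬(¬ P.IsIDB β.rel ∧ β.rel ∉ constraintRels D) := by
          intro β hβ hc
          exact hc.2 (hE β hβ hc.1)
        have hded : ρ.bodyVars.dedup.length ≤ 1 := (hss ρ hρ).2.2 hE'
        by_cases hx : ∃ x, x ∈ ρ.bodyVars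
        · obtain ⟨x₀, hx₀⟩ := hx
          have hall : ∀ y ∈ ρ.bodyVars, y = x₀ := fun y hy =>
            len_le_one_eq hded (List.mem_dedup.2 hy) (List.mem_dedup.2 hx₀)
          obtain ⟨α₁, hα₁, hxα₁⟩ := bodyVars_mem hx₀
          have hargs1 : α₁.args = [x₀] := by
            rcases hbodyshape α₁ hα₁ (hE' α₁ hα₁) with h | ⟨z, h⟩
            · rw [h] at hxα₁; cases hxα₁
            · rw [h] at hxα₁
              rw [h, ← List.mem_singleton.1 hxα₁]
          have h1 : α₁.subst g = (⟨α₁.rel, [g x₀]⟩ : Fact) := by simp [Atom.subst, hargs1]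
          obtain ⟨b, hb, hqb⟩ := huget α₁.rel (g x₀) (h1 ▸ hbody α₁ hα₁)
          have hqg : ∀ y ∈ ρ.bodyVars, q ((fun _ => b) y) = g y := by
            intro y hy; rw [hall y hy]; exact hqb
          exact hfinish (fun _ => b) hqg
            (fun α hα => hlift (fun _ => b) hqg α hα (hE' α hα))
        · push_neg at hx
          have hqg : ∀ y ∈ ρ.bodyVars, q (g y) = g y := fun y hy => absurd hy (hx y)
          exact hfinish g hqg (fun α hα => hlift g hqg α hα (hE' α hα))
    have hnsI0 : ¬ P.Sat I0 := by
      intro hsat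
      exact hg0 (hsat J0 hI0J0 hmod0)
    refine ⟨I0, ?_, q, fun f hf => Finset.mem_image_of_mem qf hf⟩
    rw [Finset.mem_toList, Set.Finite.mem_toFinset]
    refine ⟨?_, hnsI0⟩
    intro f0 hf0
    obtain ⟨f, hf, rfl⟩ := Finset.mem_image.1 hf0
    refine ⟨(hI f hf).1, by simp only [hqf, List.length_map]; exact (hI f hf).2, ?_⟩
    intro x hxmem
    simp only [hqf, List.mem_map] at hxmem
    obtain ⟨a, _, rfl⟩ := hxmem
    exact Finset.mem_image.2 ⟨_, Finset.mem_powerset.2 (Finset.filter_subset _ _), rfl⟩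
  · rintro ⟨T, hTmem, h, hh⟩
    rw [Finset.mem_toList, Set.Finite.mem_toFinset] at hTmem
    exact not_sat_of_hom hPfull hI hh hTmem.2

end MDDLogPaper
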